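/- Let G₁ ⊆ G₂ be sub-σ-algebras and X ∈ L². Suppose (U₁,V₁) are conditionally i.i.d. copies given G₁ with common conditional mean E[X|G₁], and (U₂,V₂) are conditionally i.i.d. given G₂ with conditional mean E[X|G₂], and all four variables have the same marginal law as some fixed variable. Then Cov(U₁,V₁) ≤ Cov(U₂,V₂). -/

import Mathlib

open MeasureTheory ProbabilityTheory

private lemma integrable_mul_of_memL2 {Ω : Type*} {F : MeasurableSpace Ω} {μ : Measure Ω}
    {f g : Ω → ℝ} (hf : MemLp f 2 μ) (hg : MemLp g 2 μ) :
    Integrable (fun ω => f ω * g ω) μ := by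
  have h : MemLp (f • g) 1 μ := hg.smul hf
  exact memLp_one_iff_integrable.mp h

/-- Monotonicity of pairwise covariances in the conditioning σ-algebra: conditionally i.i.d.
pairs with conditional means `E[X|G₁]` resp. `E[X|G₂]`, `G₁ ⊆ G₂`, and common marginal law
satisfy `Cov(U₁,V₁) ≤ Cov(U₂,V₂)`. -/
theorem cov_mono_in_condexp_sigma_algebra {Ω : Type*} {F : MeasurableSpace Ω}
    (μ : Measure Ω) [IsProbabilityMeasure μ]
    (G₁ G₂ : MeasurableSpace Ω) (h12 : G₁ ≤ G₂) (h2F : G₂ ≤ F)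
    (X : Ω → ℝ) (hX : MemLp X 2 μ)
    (U₁ V₁ U₂ V₂ W : Ω → ℝ)
    (hU₁ : MemLp U₁ 2 μ) (hV₁ : MemLp V₁ 2 μ) (hU₂ : MemLp U₂ 2 μ) (hV₂ : MemLp V₂ 2 μ)
    (hU₁X : condExp G₁ μ U₁ =ᵐ[μ] condExp G₁ μ X)
    (hV₁X : condExp G₁ μ V₁ =ᵐ[μ] condExp G₁ μ X)
    (hU₂X : condExp G₂ μ U₂ =ᵐ[μ] condExp G₂ μ X)
    (hV₂X : condExp G₂ μ V₂ =ᵐ[μ] condExp G₂ μ X)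
    (hci₁ : condExp G₁ μ (fun ω => U₁ ω * V₁ ω) =ᵐ[μ]
      fun ω => condExp G₁ μ U₁ ω * condExp G₁ μ V₁ ω)
    (hci₂ : condExp G₂ μ (fun ω => U₂ ω * V₂ ω) =ᵐ[μ]
      fun ω => condExp G₂ μ U₂ ω * condExp G₂ μ V₂ ω)
    (hlawU₁ : @Measure.map Ω ℝ F Real.measurableSpace U₁ μ = @Measure.map Ω ℝ F Real.measurableSpace W μ)
    (hlawV₁ : @Measure.map Ω ℝ F Real.measurableSpace V₁ μ = @Measure.map Ω ℝ F Real.measurableSpace W μ)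
    (hlawU₂ : @Measure.map Ω ℝ F Real.measurableSpace U₂ μ = @Measure.map Ω ℝ F Real.measurableSpace W μ)
    (hlawV₂ : @Measure.map Ω ℝ F Real.measurableSpace V₂ μ = @Measure.map Ω ℝ F Real.measurableSpace W μ) :
    (∫ ω, U₁ ω * V₁ ω ∂μ) - (∫ ω, U₁ ω ∂μ) * (∫ ω, V₁ ω ∂μ) ≤
      (∫ ω, U₂ ω * V₂ ω ∂μ) - (∫ ω, U₂ ω ∂μ) * (∫ ω, V₂ ω ∂μ) := by
  have h1F : G₁ ≤ F := h12.trans h2F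
  set Y₁ : Ω → ℝ := condExp G₁ μ X with hY₁def
  set Y₂ : Ω → ℝ := condExp G₂ μ X with hY₂def
  -- integrability
  have hU₁i : Integrable U₁ μ := hU₁.integrable one_le_two
  have hV₁i : Integrable V₁ μ := hV₁.integrable one_le_two
  have hU₂i : Integrable U₂ μ := hU₂.integrable one_le_two
  have hV₂i : Integrable V₂ μ := hV₂.integrable one_le_two
  have hXi : Integrable X μ := hX.integrable one_le_two
  have hUV₁ : Integrable (fun ω => U₁ ω * V₁ ω) μ := integrable_mul_of_memL2 hU₁ hV₁
  have hUV₂ : Integrable (fun ω => U₂ ω * V₂ ω) μ := integrable_mul_of_memL2 hU₂ hV₂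
  -- all means equal ∫ X
  have meanEq : ∀ (G : MeasurableSpace Ω) (hG : G ≤ F) (U : Ω → ℝ) (hUi : Integrable U μ),
      condExp G μ U =ᵐ[μ] condExp G μ X → ∫ ω, U ω ∂μ = ∫ ω, X ω ∂μ := by
    intro G hG U hUi hUX
    calc ∫ ω, U ω ∂μ = ∫ ω, condExp G μ U ω ∂μ := (integral_condExp hG).symm
    _ = ∫ ω, condExp G μ X ω ∂μ := integral_congr_ae hUX
    _ = ∫ ω, X ω ∂μ := integral_condExp hG
  have hmU₁ := meanEq G₁ h1F U₁ hU₁i hU₁X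
  have hmV₁ := meanEq G₁ h1F V₁ hV₁i hV₁X
  have hmU₂ := meanEq G₂ h2F U₂ hU₂i hU₂X
  have hmV₂ := meanEq G₂ h2F V₂ hV₂i hV₂X
  -- product integrals equal ∫ Yᵢ²
  have hcY₁ : condExp G₁ μ (fun ω => U₁ ω * V₁ ω) =ᵐ[μ] fun ω => Y₁ ω * Y₁ ω := by
    filter_upwards [hci₁, hU₁X, hV₁X] with ω h1 h2 h3
    rw [h1, h2, h3]
  have hcY₂ : condExp G₂ μ (fun ω => U₂ ω * V₂ ω) =ᵐ[μ] fun ω => Y₂ ω * Y₂ ω := by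
    filter_upwards [hci₂, hU₂X, hV₂X] with ω h1 h2 h3
    rw [h1, h2, h3]
  have hY₁sq : Integrable (fun ω => Y₁ ω * Y₁ ω) μ :=
    (integrable_condExp.congr hcY₁)
  have hY₂sq : Integrable (fun ω => Y₂ ω * Y₂ ω) μ :=
    (integrable_condExp.congr hcY₂)
  have hprod₁ : ∫ ω, U₁ ω * V₁ ω ∂μ = ∫ ω, Y₁ ω * Y₁ ω ∂μ := by
    rw [← integral_condExp h1F]
    exact integral_congr_ae hcY₁
  have hprod₂ : ∫ ω, U₂ ω * V₂ ω ∂μ = ∫ ω, Y₂ ω * Y₂ ω ∂μ := by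
    rw [← integral_condExp h2F]
    exact integral_congr_ae hcY₂
  -- cross term: ∫ Y₁ Y₂ = ∫ Y₁²
  have hY₂i : Integrable Y₂ μ := integrable_condExp
  have hcross_int : Integrable (fun ω => Y₁ ω * Y₂ ω) μ := by
    have hb : ∀ᵐ ω ∂μ, ‖Y₁ ω * Y₂ ω‖ ≤ (Y₁ ω * Y₁ ω + Y₂ ω * Y₂ ω) := by
      filter_upwards with ω
      rw [norm_mul, Real.norm_eq_abs, Real.norm_eq_abs]
      nlinarith [abs_nonneg (Y₁ ω), abs_nonneg (Y₂ ω), sq_abs (Y₁ ω), sq_abs (Y₂ ω),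
        sq_nonneg (|Y₁ ω| - |Y₂ ω|)]
    exact Integrable.mono' (hY₁sq.add hY₂sq) (stronglyMeasurable_condExp.mono h1F
      |>.aestronglyMeasurable.mul (stronglyMeasurable_condExp.mono h2F |>.aestronglyMeasurable)) hb
  have hcondY₂ : condExp G₁ μ Y₂ =ᵐ[μ] Y₁ := condExp_condExp_of_le h12 h2F
  have hcross_int' : Integrable (Y₁ * Y₂) μ := hcross_int
  have hpull : condExp G₁ μ (Y₁ * Y₂) =ᵐ[μ] Y₁ * condExp G₁ μ Y₂ :=
    condExp_mul_of_stronglyMeasurable_left stronglyMeasurable_condExp hcross_int' hY₂i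
  have hcross : ∫ ω, Y₁ ω * Y₂ ω ∂μ = ∫ ω, Y₁ ω * Y₁ ω ∂μ := by
    have h1 : ∫ ω, Y₁ ω * Y₂ ω ∂μ = ∫ ω, condExp G₁ μ (Y₁ * Y₂) ω ∂μ :=
      (integral_condExp h1F).symm
    rw [h1]
    refine integral_congr_ae ?_
    filter_upwards [hpull, hcondY₂] with ω h1 h2
    rw [h1]; simp only [Pi.mul_apply]; rw [h2]
  -- key inequality: ∫ Y₁² ≤ ∫ Y₂²
  have hkey : ∫ ω, Y₁ ω * Y₁ ω ∂μ ≤ ∫ ω, Y₂ ω * Y₂ ω ∂μ := by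
    have hnn : 0 ≤ ∫ ω, (Y₂ ω - Y₁ ω) * (Y₂ ω - Y₁ ω) ∂μ :=
      integral_nonneg fun ω => mul_self_nonneg _
    have hexp : ∫ ω, (Y₂ ω - Y₁ ω) * (Y₂ ω - Y₁ ω) ∂μ
        = ∫ ω, Y₂ ω * Y₂ ω ∂μ - 2 * ∫ ω, Y₁ ω * Y₂ ω ∂μ + ∫ ω, Y₁ ω * Y₁ ω ∂μ := by
      have : (fun ω => (Y₂ ω - Y₁ ω) * (Y₂ ω - Y₁ ω))
          = fun ω => Y₂ ω * Y₂ ω - (2 : ℝ) * (Y₁ ω * Y₂ ω) + Y₁ ω * Y₁ ω := by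
        funext ω; ring
      have h4 : Integrable (fun ω => 2 * (Y₁ ω * Y₂ ω)) μ := hcross_int.const_mul 2
      have h1 : Integrable (fun ω => Y₂ ω * Y₂ ω - 2 * (Y₁ ω * Y₂ ω)) μ := hY₂sq.sub h4
      rw [this, integral_add h1 hY₁sq, integral_sub hY₂sq h4, integral_const_mul]
    rw [hexp, hcross] at hnn
    linarith
  rw [hprod₁, hprod₂, hmU₁, hmV₁, hmU₂, hmV₂]
  linarith
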